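/- If the coefficients of X_G(x,t) (as a polynomial in t) are symmetric functions, then X_G(x,t) is palindromic in t: X_G(x,t) = t^{|E|} X_G(x, t^{-1}). -/

import Mathlib

/-- A graph on a finite set of positive integers, with edges stored as ordered
pairs `(i, j)` with `i < j`. -/
structure FinGraph where
  V : Finset ℕ
  E : Finset (ℕ × ℕ)
  mem_fst : ∀ e ∈ E, e.1 ∈ V
  mem_snd : ∀ e ∈ E, e.2 ∈ V
  fst_lt_snd : ∀ e ∈ E, e.1 < e.2
  pos : ∀ v ∈ V, 0 < v

/-- A proper coloring of `G` by positive integers (set to `0` off the vertex set). -/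
def IsProperColoring (G : FinGraph) (κ : ℕ → ℕ) : Prop :=
  (∀ v ∈ G.V, 0 < κ v) ∧ (∀ v, v ∉ G.V → κ v = 0) ∧ ∀ e ∈ G.E, κ e.1 ≠ κ e.2

/-- `asc κ`: the number of edges `{i,j}` with `i < j` and `κ i < κ j`. -/
def ascNum (G : FinGraph) (κ : ℕ → ℕ) : ℕ :=
  (G.E.filter fun e => κ e.1 < κ e.2).card

/-- The monomial `x_κ = ∏_{v ∈ V} x_{κ v}`, recorded as an exponent vector. -/
noncomputable def xmonom (G : FinGraph) (κ : ℕ → ℕ) : ℕ →₀ ℕ :=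
  ∑ v ∈ G.V, Finsupp.single (κ v) 1

/-- The chromatic quasisymmetric function `X_G(x,t)`, as a formal power series in
the variables `x_1, x_2, …` whose coefficients are polynomials in `t`. -/
noncomputable def XG (G : FinGraph) : MvPowerSeries ℕ (Polynomial ℚ) :=
  fun d => ∑ᶠ κ ∈ {κ : ℕ → ℕ | IsProperColoring G κ ∧ xmonom G κ = d},
    (Polynomial.X : Polynomial ℚ) ^ ascNum G κ

/-- `[k]_t = 1 + t + ⋯ + t^(k-1)`. -/
noncomputable def tnum (R : Type*) [CommSemiring R] (k : ℕ) : Polynomial R :=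
  ∑ j ∈ Finset.range k, Polynomial.X ^ j

/- ### Auxiliary lemmas -/

lemma ascNum_le (G : FinGraph) (κ : ℕ → ℕ) : ascNum G κ ≤ G.E.card :=
  Finset.card_filter_le _ _

/-- Every color used on a vertex appears in the support of the monomial. -/
lemma color_mem_support (G : FinGraph) (κ : ℕ → ℕ) {v : ℕ} (hv : v ∈ G.V) :
    κ v ∈ (xmonom G κ).support := by
  rw [Finsupp.mem_support_iff, xmonom, Finsupp.finset_sum_apply]
  intro h0
  rw [Finset.sum_eq_zero_iff] at h0
  have := h0 v hv
  simp [Finsupp.single_apply] at this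

/-- The set of proper colorings with a fixed monomial is finite. -/
lemma S_finite (G : FinGraph) (d : ℕ →₀ ℕ) :
    {κ : ℕ → ℕ | IsProperColoring G κ ∧ xmonom G κ = d}.Finite := by
  set S := {κ : ℕ → ℕ | IsProperColoring G κ ∧ xmonom G κ = d} with hS
  have hmem : ∀ κ ∈ S, ∀ v : ℕ, κ v ∈ insert 0 (d.support : Set ℕ) := by
    rintro κ ⟨hp, hx⟩ v
    by_cases hv : v ∈ G.V
    · right
      have := color_mem_support G κ hv
      rwa [hx] at this
    · left
      exact hp.2.1 v hv
  apply Set.Finite.of_finite_image (f := fun κ (v : ↥G.V) => κ v.1)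
  · apply Set.Finite.subset
      (Set.Finite.pi (t := fun _ : ↥G.V => insert 0 (d.support : Set ℕ))
        (fun _ => (d.support.finite_toSet).insert 0))
    rintro f ⟨κ, hκ, rfl⟩
    intro v _
    exact hmem κ hκ v.1
  · rintro κ₁ hκ₁ κ₂ hκ₂ h
    funext v
    by_cases hv : v ∈ G.V
    · exact congrFun h ⟨v, hv⟩
    · rw [hκ₁.1.2.1 v hv, hκ₂.1.2.1 v hv]

lemma coeff_XG (G : FinGraph) (d : ℕ →₀ ℕ) :
    MvPowerSeries.coeff d (XG G) =
      ∑ κ ∈ (S_finite G d).toFinset,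
        (Polynomial.X : Polynomial ℚ) ^ ascNum G κ := by
  rw [MvPowerSeries.coeff_apply, ← finsum_mem_coe_finset, (S_finite G d).coe_toFinset]
  rfl

theorem palindromic_of_symmetric (G : FinGraph)
    (hsym : ∀ π : Equiv.Perm ℕ, π 0 = 0 → ∀ d : ℕ →₀ ℕ,
      MvPowerSeries.coeff (Finsupp.equivMapDomain π d) (XG G) =
        MvPowerSeries.coeff d (XG G)) :
    ∀ d : ℕ →₀ ℕ, ∀ j ≤ G.E.card,
      (MvPowerSeries.coeff d (XG G)).coeff j =
        (MvPowerSeries.coeff d (XG G)).coeff (G.E.card - j) := by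
  intro d j hj
  classical
  set N := d.support.sup id with hNdef
  have hle : ∀ a ∈ d.support, a ≤ N := fun a ha => Finset.le_sup (f := id) ha
  -- the color-reversing permutation
  set f : ℕ → ℕ := fun k => if 1 ≤ k ∧ k ≤ N then N + 1 - k else k with hf
  have hff : ∀ k, f (f k) = k := by
    intro k; simp only [hf]; split_ifs <;> omega
  set π : Equiv.Perm ℕ := ⟨f, f, fun k => hff k, fun k => hff k⟩ with hπ
  have hπ0 : π 0 = 0 := by simp [hπ, hf]
  have hfinj : Function.Injective f := by
    intro a b h
    have := hff a
    rw [h, hff] at this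
    exact this.symm
  -- key facts about colorings
  have hcolor : ∀ κ : ℕ → ℕ, IsProperColoring G κ → xmonom G κ = d →
      ∀ v ∈ G.V, 1 ≤ κ v ∧ κ v ≤ N := by
    intro κ hp hx v hv
    refine ⟨hp.1 v hv, ?_⟩
    have := color_mem_support G κ hv
    rw [hx] at this
    exact hle _ this
  -- xmonom under π
  have hxm : ∀ κ : ℕ → ℕ, Finsupp.equivMapDomain π (xmonom G κ) = xmonom G (π ∘ κ) := by
    intro κ
    rw [Finsupp.equivMapDomain_eq_mapDomain, xmonom, xmonom]
    rw [Finsupp.mapDomain_finset_sum]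
    exact Finset.sum_congr rfl fun v _ => Finsupp.mapDomain_single
  -- the involution on colorings maps S d to S (π·d)
  set d' := Finsupp.equivMapDomain π d with hd'
  have hproper : ∀ κ : ℕ → ℕ, IsProperColoring G κ → IsProperColoring G (π ∘ κ) := by
    rintro κ ⟨h1, h2, h3⟩
    refine ⟨fun v hv => ?_, fun v hv => ?_, fun e he h => h3 e he (hfinj h)⟩
    · have := h1 v hv
      simp only [Function.comp, hπ, Equiv.coe_fn_mk, hf]
      split_ifs <;> omega
    · simp [Function.comp, h2 v hv, hπ, hf]
  have hS1 : ∀ κ : ℕ → ℕ, IsProperColoring G κ ∧ xmonom G κ = d →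
      IsProperColoring G (π ∘ κ) ∧ xmonom G (π ∘ κ) = d' := by
    rintro κ ⟨hp, hx⟩
    exact ⟨hproper κ hp, by rw [← hxm, hx]⟩
  have hS2 : ∀ κ : ℕ → ℕ, IsProperColoring G κ ∧ xmonom G κ = d' →
      IsProperColoring G (π ∘ κ) ∧ xmonom G (π ∘ κ) = d := by
    rintro κ ⟨hp, hx⟩
    refine ⟨hproper κ hp, ?_⟩
    rw [← hxm, hx, hd']
    ext a
    simp [Finsupp.equivMapDomain_apply, hπ, hff]
  -- ascent complementation
  have hasc : ∀ κ : ℕ → ℕ, IsProperColoring G κ → xmonom G κ = d →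
      ascNum G (π ∘ κ) = G.E.card - ascNum G κ := by
    intro κ hp hx
    have hsum : ascNum G κ + ascNum G (π ∘ κ) = G.E.card := by
      have h2 : ascNum G (π ∘ κ) =
          (G.E.filter fun e => ¬ κ e.1 < κ e.2).card := by
        unfold ascNum
        congr 1
        apply Finset.filter_congr
        intro e he
        have h1 := hcolor κ hp hx e.1 (G.mem_fst e he)
        have h2 := hcolor κ hp hx e.2 (G.mem_snd e he)
        have hne := hp.2.2 e he
        simp only [Function.comp, hπ, Equiv.coe_fn_mk, hf, eq_iff_iff]
        split_ifs <;> omega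
      rw [h2]
      exact Finset.card_filter_add_card_filter_not _
    omega
  -- reindex the sum over S d' by the involution
  have hre : ∑ κ ∈ (S_finite G d').toFinset,
      (Polynomial.X : Polynomial ℚ) ^ ascNum G κ =
      ∑ κ ∈ (S_finite G d).toFinset,
        (Polynomial.X : Polynomial ℚ) ^ (G.E.card - ascNum G κ) := by
    refine Finset.sum_nbij' (fun κ => π ∘ κ) (fun κ => π ∘ κ) ?_ ?_ ?_ ?_ ?_
    · intro κ hκ
      simp only [Set.Finite.mem_toFinset, Set.mem_setOf_eq] at hκ ⊢
      exact hS2 κ hκ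
    · intro κ hκ
      simp only [Set.Finite.mem_toFinset, Set.mem_setOf_eq] at hκ ⊢
      exact hS1 κ hκ
    · intro κ _; funext v; simp [Function.comp, hπ, hff]
    · intro κ _; funext v; simp [Function.comp, hπ, hff]
    · intro κ hκ
      simp only [Set.Finite.mem_toFinset, Set.mem_setOf_eq] at hκ
      obtain ⟨hp, hx⟩ := hS2 κ hκ
      have := hasc (π ∘ κ) hp hx
      have heq : π ∘ π ∘ κ = κ := by funext v; simp [Function.comp, hπ, hff]
      rw [heq] at this
      rw [this]
  have hs := hsym π hπ0 d
  rw [← hd'] at hs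
  calc (MvPowerSeries.coeff d (XG G)).coeff j
      = (MvPowerSeries.coeff d' (XG G)).coeff j := by rw [hs]
    _ = (∑ κ ∈ (S_finite G d').toFinset,
          (Polynomial.X : Polynomial ℚ) ^ ascNum G κ).coeff j := by rw [coeff_XG]
    _ = (∑ κ ∈ (S_finite G d).toFinset,
          (Polynomial.X : Polynomial ℚ) ^ (G.E.card - ascNum G κ)).coeff j := by rw [hre]
    _ = (∑ κ ∈ (S_finite G d).toFinset,
          (Polynomial.X : Polynomial ℚ) ^ ascNum G κ).coeff (G.E.card - j) := by
          rw [Polynomial.finset_sum_coeff, Polynomial.finset_sum_coeff]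
          refine Finset.sum_congr rfl fun κ hκ => ?_
          rw [Polynomial.coeff_X_pow, Polynomial.coeff_X_pow]
          have hb := ascNum_le G κ
          have heq : (j = G.E.card - ascNum G κ) ↔ (G.E.card - j = ascNum G κ) := by omega
          simp only [heq]
    _ = (MvPowerSeries.coeff d (XG G)).coeff (G.E.card - j) := by
          rw [coeff_XG]
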